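/- Let a, b be nonzero integers and n ≥ 1 with a + b ≠ 0, (n+1)*a + b ≠ 0, and a + (n+1)*b ≠ 0. Then the equation a*x^n + b*y^n = z^{n+1} is not partition regular on the positive integers, except possibly for constant solutions. -/

import Mathlib

lemma myPow_sub_pow_le (x M : ℤ) (h0 : 0 ≤ x) (hm : x ≤ M) :
    ∀ k : ℕ, M^(k+1) - x^(k+1) ≤ (k+1) * M^k * (M - x) := by
  intro k
  have hM0 : 0 ≤ M := h0.trans hm
  induction k with
  | zero => simp
  | succ k ih =>
    have e : M^(k+1+1) - x^(k+1+1) = M * (M^(k+1) - x^(k+1)) + x^(k+1)*(M-x) := by ring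
    have h1 : M * (M^(k+1) - x^(k+1)) ≤ M * ((k+1) * M^k * (M - x)) :=
      mul_le_mul_of_nonneg_left ih hM0
    have h2 : x^(k+1)*(M-x) ≤ M^(k+1)*(M-x) :=
      mul_le_mul_of_nonneg_right (pow_le_pow_left₀ h0 hm (k+1)) (by linarith)
    have e2 : M * ((k+1) * M^k * (M - x)) + M^(k+1)*(M-x) = ((k:ℤ)+1+1) * M^(k+1) * (M - x) := by
      ring
    have e3 : ((↑(k + 1):ℤ) + 1) * M ^ (k + 1) * (M - x) = ((k:ℤ)+1+1) * M^(k+1) * (M - x) := by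
      push_cast; ring
    rw [e3]
    linarith [e, h1, h2, e2]

lemma myLog_ge (x : ℝ) (hx : 0 < x) : 1 - 1/x ≤ Real.log x := by
  have h := Real.log_le_sub_one_of_pos (x := x⁻¹) (by positivity)
  rw [Real.log_inv] at h
  have : 1/x = x⁻¹ := one_div x
  linarith

lemma myAbs_log_le (u : ℝ) (hu : |u| ≤ 1/2) : |Real.log (1+u)| ≤ 2 * |u| := by
  have hu1 : -(1/2) ≤ u := (abs_le.mp hu).1
  have hu2 : u ≤ 1/2 := (abs_le.mp hu).2
  have hpos : (0:ℝ) < 1 + u := by linarith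
  have hup : Real.log (1+u) ≤ u := by
    have := Real.log_le_sub_one_of_pos hpos
    linarith
  have hlow : 1 - 1/(1+u) ≤ Real.log (1+u) := myLog_ge _ hpos
  have hlow2 : -(2*|u|) ≤ 1 - 1/(1+u) := by
    have h1u : 1 - 1/(1+u) = u/(1+u) := by field_simp; ring
    rw [h1u]
    have habs : |u/(1+u)| ≤ 2*|u| := by
      rw [abs_div, abs_of_pos hpos, div_le_iff₀ hpos]
      have : (1:ℝ) ≤ 2*(1+u) := by linarith
      nlinarith [abs_nonneg u]
    linarith [(abs_le.mp habs).1]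
  rw [abs_le]
  constructor
  · linarith
  · have : u ≤ |u| := le_abs_self u
    linarith [abs_nonneg u]

lemma myBucket_contra (u v : ℝ) (hdvd : (3:ℤ) ∣ ⌊v⌋ - ⌊u⌋)
    (hbk : (Int.fract u < 1/2) ↔ (Int.fract v < 1/2))
    (hd : |v - u + 1| ≤ 1/5) : False := by
  obtain ⟨k, hk⟩ := hdvd
  have hu := Int.floor_add_fract u
  have hv := Int.floor_add_fract v
  have hfu0 := Int.fract_nonneg u
  have hfu1 := Int.fract_lt_one u
  have hfv0 := Int.fract_nonneg v
  have hfv1 := Int.fract_lt_one v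
  have hf : |Int.fract v - Int.fract u| < 1/2 := by
    rcases (em (Int.fract u < 1/2)) with h | h
    · have h' := hbk.mp h
      rw [abs_lt]; constructor <;> linarith
    · have h' : ¬ Int.fract v < 1/2 := fun hh => h (hbk.mpr hh)
      push_neg at h h'
      rw [abs_lt]; constructor <;> linarith
  have hd1 := (abs_le.mp hd).1
  have hd2 := (abs_le.mp hd).2
  have hf1 := (abs_lt.mp hf).1
  have hf2 := (abs_lt.mp hf).2
  have hkR : ((3*k : ℤ):ℝ) = (v - u) - (Int.fract v - Int.fract u) := by
    rw [← hk]; push_cast; linarith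
  have hneg : ((3*k : ℤ):ℝ) < 0 := by rw [hkR]; linarith
  have hkneg : 3*k < 0 := by exact_mod_cast hneg
  have : 3*k ≤ -3 := by omega
  have : ((3*k : ℤ):ℝ) ≤ -3 := by exact_mod_cast this
  rw [hkR] at this; linarith

set_option maxHeartbeats 1000000 in
lemma myHgap (n : ℕ) (hn : 1 ≤ n) (L W Z : ℝ)
    (hL : Real.log 2 ≤ L) (hL0 : 0 < L)
    (hW : 20 * L ≤ Real.log W)
    (hc1 : (n:ℝ) * Real.log W ≤ Real.log 2 + ((n:ℝ)+1) * Real.log Z)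
    (hc2 : ((n:ℝ)+1) * Real.log Z ≤ L + (n:ℝ) * Real.log W) :
    |(Real.log (Real.log Z) - Real.log (Real.log W)) / Real.log (((n:ℝ)+1)/n) + 1| ≤ 1/5 := by
  have hn1 : (1:ℝ) ≤ (n:ℝ) := by exact_mod_cast hn
  have hnpos : (0:ℝ) < n := by linarith
  set lW := Real.log W with hlW
  set lZ := Real.log Z with hlZ
  set c := ((n:ℝ)+1) * lZ - (n:ℝ) * lW with hc
  have hcU : c ≤ L := by simp only [hc]; linarith
  have hcL : -L ≤ c := by simp only [hc]; linarith
  have habsc : |c| ≤ L := abs_le.mpr ⟨hcL, hcU⟩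
  have hlWpos : 0 < lW := by linarith
  have hlW20 : 20 * L ≤ lW := hW
  -- u := c / (n * lW)
  set u := c / ((n:ℝ) * lW) with hu
  have hnlW : (0:ℝ) < (n:ℝ) * lW := by positivity
  have habsu : |u| ≤ 1/(20*(n:ℝ)) := by
    rw [hu, abs_div, abs_of_pos hnlW, div_le_iff₀ hnlW]
    have h1 : (1:ℝ)/(20*n) * ((n:ℝ) * lW) = lW / 20 := by field_simp
    rw [h1]
    have : L ≤ lW/20 := by linarith
    linarith [habsc]
  have husmall : |u| ≤ 1/2 := by
    have : (1:ℝ)/(20*n) ≤ 1/2 := by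
      rw [div_le_div_iff₀ (by positivity) (by norm_num)]
      linarith
    linarith
  have hlog_u := myAbs_log_le u husmall
  -- lb
  set lb := Real.log (((n:ℝ)+1)/n) with hlb
  have hlbpos : 0 < lb := Real.log_pos (by rw [lt_div_iff₀ hnpos]; linarith)
  have hlb_ge : 1/((n:ℝ)+1) ≤ lb := by
    have := myLog_ge (((n:ℝ)+1)/n) (by positivity)
    have he : 1 - 1/(((n:ℝ)+1)/n) = 1/((n:ℝ)+1) := by
      rw [one_div_div]; field_simp; ring
    rw [he] at this; exact this
  have hlb_ge' : 1/(2*(n:ℝ)) ≤ lb := by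
    have : 1/(2*(n:ℝ)) ≤ 1/((n:ℝ)+1) := by
      apply div_le_div_of_nonneg_left (by norm_num) (by positivity) (by linarith)
    linarith
  -- key identity
  have hZpos : 0 < (n:ℝ)*lW + c := by nlinarith
  have hlZeq : lZ = ((n:ℝ)*lW + c)/((n:ℝ)+1) := by
    rw [eq_div_iff (by positivity)]
    simp only [hc]; ring
  have hfrac : (n:ℝ)*lW + c = lW * ((n:ℝ) + c/lW) := by field_simp
  have hncW : (0:ℝ) < (n:ℝ) + c/lW := by
    have : |c/lW| ≤ 1/20 := by
      rw [abs_div, abs_of_pos hlWpos, div_le_iff₀ hlWpos]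
      nlinarith
    have := (abs_le.mp this).1
    linarith
  have hlogZ : Real.log lZ = Real.log lW + Real.log ((n:ℝ) + c/lW) - Real.log ((n:ℝ)+1) := by
    rw [hlZeq, Real.log_div (by positivity) (by positivity), hfrac,
      Real.log_mul (ne_of_gt hlWpos) (ne_of_gt hncW)]
  have hkey : Real.log lZ - Real.log lW + lb = Real.log (1 + u) := by
    rw [hlogZ, hlb, Real.log_div (by positivity) (ne_of_gt hnpos)]
    have h1u : 1 + u = ((n:ℝ) + c/lW)/n := by
      rw [hu]
      field_simp [ne_of_gt hnpos, ne_of_gt hlWpos]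
    rw [h1u, Real.log_div (ne_of_gt hncW) (ne_of_gt hnpos)]
    ring
  -- conclude
  have hgoal : (Real.log lZ - Real.log lW) / lb + 1 = Real.log (1+u) / lb := by
    rw [div_add_one (ne_of_gt hlbpos), hkey]
  rw [hgoal, abs_div, abs_of_pos hlbpos, div_le_iff₀ hlbpos]
  have h1 : |Real.log (1+u)| ≤ 2 * (1/(20*(n:ℝ))) := by linarith [hlog_u, habsu]
  have h2 : (1:ℝ)/5 * (1/(2*(n:ℝ))) ≤ 1/5 * lb := by nlinarith
  have h3 : 2 * (1/(20*(n:ℝ))) = 1/5 * (1/(2*(n:ℝ))) := by field_simp; ring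
  linarith


lemma myPow_sub_pow_le' (x M : ℤ) (h0 : 0 ≤ x) (hm : x ≤ M) (k : ℕ) :
    M^(k+1) - x^(k+1) ≤ (k+1) * M^k * (M - x) :=
  myPow_sub_pow_le x M h0 hm k

lemma myFar (a b : ℤ) (n : ℕ) (hn : 1 ≤ n) (A B : ℕ)
    (hA1 : 1 ≤ A) (haA : a.natAbs ≤ A) (hbA : b.natAbs ≤ A)
    (hB : 2*A*(n+1) ≤ B) (hB2 : 2 ≤ B) (ha : a ≠ 0)
    (x y z : ℕ) (hzpos : 0 < z) (hxB : B ≤ x) (hyB : B ≤ y)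
    (hfar : Nat.log B y + 3 ≤ Nat.log B x)
    (heq : a * (x:ℤ)^n + b * (y:ℤ)^n = (z:ℤ)^(n+1)) :
    ((x:ℤ))^n ≤ 2 * (z:ℤ)^(n+1) ∧ (z:ℤ)^(n+1) ≤ 2*(A:ℤ)*(x:ℤ)^n := by
  have hxpos : 0 < x := lt_of_lt_of_le (by omega) hxB
  have hx1 : B ^ Nat.log B x ≤ x := Nat.pow_log_le_self B (by omega)
  have hy1 : y < B ^ (Nat.log B y + 1) := Nat.lt_pow_succ_log_self (by omega) y
  have hkey : B^2 * y ≤ x := by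
    calc B^2 * y ≤ B^2 * B^(Nat.log B y + 1) := Nat.mul_le_mul_left _ (le_of_lt hy1)
    _ = B^(Nat.log B y + 3) := by ring
    _ ≤ B^(Nat.log B x) := Nat.pow_le_pow_right (by omega) hfar
    _ ≤ x := hx1
  have hkeyZ : ((B:ℤ))^2 * (y:ℤ) ≤ (x:ℤ) := by exact_mod_cast hkey
  have hyn0 : (0:ℤ) ≤ (y:ℤ) := Int.natCast_nonneg y
  have hBy0 : (0:ℤ) ≤ ((B:ℤ))^2 * (y:ℤ) := by positivity
  have hpow : (((B:ℤ))^2 * (y:ℤ))^n ≤ (x:ℤ)^n := pow_le_pow_left₀ hBy0 hkeyZ n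
  have hB2A : 2*(A:ℤ) ≤ ((B:ℤ))^2 := by
    have h1 : 2*A ≤ B := by nlinarith [hB]
    have h2 : (B:ℤ) ≤ ((B:ℤ))^2 := by nlinarith [Int.natCast_nonneg B]
    have : (2*(A:ℤ)) ≤ (B:ℤ) := by exact_mod_cast h1
    linarith
  have hyn : 2*(A:ℤ) * (y:ℤ)^n ≤ (x:ℤ)^n := by
    have h1 : (((B:ℤ))^2 * (y:ℤ))^n = (((B:ℤ))^2)^n * (y:ℤ)^n := mul_pow _ _ _
    have hB1 : (2:ℤ) ≤ (B:ℤ) := by exact_mod_cast hB2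
    have h2 : ((B:ℤ))^2 ≤ (((B:ℤ))^2)^n := by
      apply le_self_pow₀ (by nlinarith) (by omega)
    have h3 : 2*(A:ℤ) * (y:ℤ)^n ≤ (((B:ℤ))^2)^n * (y:ℤ)^n := by
      apply mul_le_mul_of_nonneg_right (le_trans hB2A h2) (by positivity)
    calc 2*(A:ℤ) * (y:ℤ)^n ≤ (((B:ℤ))^2)^n * (y:ℤ)^n := h3
    _ = (((B:ℤ))^2 * (y:ℤ))^n := (mul_pow _ _ _).symm
    _ ≤ (x:ℤ)^n := hpow
  have habs_b : |b| ≤ (A:ℤ) := by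
    rw [Int.abs_eq_natAbs]; exact_mod_cast hbA
  have habs_a : |a| ≤ (A:ℤ) := by
    rw [Int.abs_eq_natAbs]; exact_mod_cast haA
  have hypos' : (0:ℤ) < (y:ℤ) := by exact_mod_cast lt_of_lt_of_le (by omega : 0 < B) hyB
  have hxpos' : (0:ℤ) < (x:ℤ) := by exact_mod_cast lt_of_lt_of_le (by omega : 0 < B) hxB
  have hynpos : (0:ℤ) < (y:ℤ)^n := pow_pos hypos' n
  have hxnpos : (0:ℤ) < (x:ℤ)^n := pow_pos hxpos' n
  have hby : |b * (y:ℤ)^n| ≤ (A:ℤ) * (y:ℤ)^n := by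
    rw [abs_mul, abs_of_pos hynpos]
    exact mul_le_mul_of_nonneg_right habs_b (le_of_lt hynpos)
  have hby2 : 2 * |b * (y:ℤ)^n| ≤ (x:ℤ)^n := by linarith
  have hzp : (0:ℤ) < (z:ℤ)^(n+1) := pow_pos (by exact_mod_cast hzpos) (n+1)
  have hby3 : |2 * (b * (y:ℤ)^n)| ≤ (x:ℤ)^n := by
    rw [abs_mul]
    simpa using hby2
  have hbyl := (abs_le.mp hby3).1
  have hbyu := (abs_le.mp hby3).2
  rcases lt_or_gt_of_ne ha with hneg | hpos
  · exfalso
    have ha1 : a ≤ -1 := by omega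
    have : a * (x:ℤ)^n ≤ (-1) * (x:ℤ)^n :=
      mul_le_mul_of_nonneg_right ha1 (le_of_lt hxnpos)
    linarith
  · have ha1 : (1:ℤ) ≤ a := hpos
    have hl : (x:ℤ)^n ≤ a * (x:ℤ)^n := le_mul_of_one_le_left (le_of_lt hxnpos) ha1
    have hu : a * (x:ℤ)^n ≤ (A:ℤ) * (x:ℤ)^n :=
      mul_le_mul_of_nonneg_right (le_trans (le_abs_self a) habs_a) (le_of_lt hxnpos)
    have hA1' : ((1:ℤ)) ≤ (A:ℤ) := by exact_mod_cast hA1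
    have hAx : (x:ℤ)^n ≤ (A:ℤ) * (x:ℤ)^n := le_mul_of_one_le_left (le_of_lt hxnpos) hA1'
    constructor
    · linarith
    · linarith

lemma myNear (a b : ℤ) (n : ℕ) (hn : 1 ≤ n) (A B : ℕ)
    (hA1 : 1 ≤ A) (haA : a.natAbs ≤ A) (habA : (a+b).natAbs ≤ A)
    (hB : 2*A*(n+1) ≤ B) (hB2 : 2 ≤ B) (hab : a + b ≠ 0)
    (x y z : ℕ) (hzpos : 0 < z) (hxB : B ≤ x) (hyB : B ≤ y) (hxy : x ≤ y)
    (hlog : Nat.log B x = Nat.log B y)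
    (hTeq : x / B^(Nat.log B x - 1) = y / B^(Nat.log B y - 1))
    (heq : a * (x:ℤ)^n + b * (y:ℤ)^n = (z:ℤ)^(n+1)) :
    ((y:ℤ))^n ≤ 2 * (z:ℤ)^(n+1) ∧ (z:ℤ)^(n+1) ≤ 2*(A:ℤ)*(y:ℤ)^n := by
  set ℓ := Nat.log B y with hℓ
  have hℓ1 : 1 ≤ ℓ := Nat.log_pos (by omega) hyB
  set K := B^(ℓ-1) with hK
  have hKpos : 0 < K := Nat.pow_pos (by omega)
  have hBK : B * K = B^ℓ := by
    rw [hK, ← pow_succ']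
    congr 1
    omega
  have hyl : B^ℓ ≤ y := Nat.pow_log_le_self B (by omega)
  set T := y / K with hT
  have hTx : x / K = T := by
    rw [← hTeq, hlog, ← hK]
  have hTK_x : T * K ≤ x := by
    rw [← hTx]; exact Nat.div_mul_le_self x K
  have hy_lt : y < T * K + K := by
    have h1 := Nat.div_add_mod y K
    have h2 : y % K < K := Nat.mod_lt _ hKpos
    have h3 : T * K = K * (y / K) := by rw [hT]; ring
    omega
  have hBT : B ≤ T := by
    rw [hT, Nat.le_div_iff_mul_le hKpos, hBK]
    exact hyl
  have hBKx : B * K ≤ x := le_trans (Nat.mul_le_mul_right K hBT) hTK_x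
  -- differences
  have hd : y < x + K := by omega
  have hxyZ' : (x:ℤ) ≤ (y:ℤ) := by exact_mod_cast hxy
  have hdZ0 : (0:ℤ) ≤ (y:ℤ) - (x:ℤ) := by linarith
  have hdZK : (y:ℤ) - (x:ℤ) ≤ (K:ℤ) := by
    have : (y:ℤ) < (x:ℤ) + (K:ℤ) := by exact_mod_cast hd
    linarith
  have hxpos' : (0:ℤ) < (x:ℤ) := by exact_mod_cast lt_of_lt_of_le (by omega : 0 < B) hxB
  have hypos' : (0:ℤ) < (y:ℤ) := by exact_mod_cast lt_of_lt_of_le (by omega : 0 < B) hyB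
  have hxyZ : (x:ℤ) ≤ (y:ℤ) := by exact_mod_cast hxy
  -- E bound
  obtain ⟨k, hk⟩ : ∃ k, n = k + 1 := ⟨n - 1, by omega⟩
  subst hk
  have hE0 : (0:ℤ) ≤ (y:ℤ)^(k+1) - (x:ℤ)^(k+1) := by
    have := pow_le_pow_left₀ (le_of_lt hxpos') hxyZ (k+1)
    linarith
  have hE : (y:ℤ)^(k+1) - (x:ℤ)^(k+1) ≤ (k+1) * (y:ℤ)^k * ((y:ℤ) - (x:ℤ)) :=
    myPow_sub_pow_le' (x:ℤ) (y:ℤ) (le_of_lt hxpos') hxyZ k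
  have hykpos : (0:ℤ) < (y:ℤ)^k := pow_pos hypos' k
  -- 2*A*(k+1)*(y - x) ≤ y
  have hAnK : 2*(A:ℤ)*((k:ℤ)+1)*((y:ℤ)-(x:ℤ)) ≤ (y:ℤ) := by
    have h1 : 2*A*(k+1) ≤ B := by
      calc 2*A*(k+1) ≤ 2*A*(k+1+1) := by nlinarith
      _ ≤ B := hB
    have h2 : 2*A*(k+1)*K ≤ B*K := Nat.mul_le_mul_right K h1
    have h3 : B*K ≤ y := le_trans hBKx (by exact_mod_cast hxy)
    have h4 : (2*(A:ℤ)*((k:ℤ)+1))*(K:ℤ) ≤ (y:ℤ) := by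
      have := le_trans h2 h3
      exact_mod_cast this
    have h5 : 2*(A:ℤ)*((k:ℤ)+1)*((y:ℤ)-(x:ℤ)) ≤ (2*(A:ℤ)*((k:ℤ)+1))*(K:ℤ) := by
      apply mul_le_mul_of_nonneg_left hdZK
      positivity
    linarith
  have hEb : 2*(A:ℤ)*((y:ℤ)^(k+1) - (x:ℤ)^(k+1)) ≤ (y:ℤ)^(k+1) := by
    have hA0 : (0:ℤ) ≤ 2*(A:ℤ) := by positivity
    have h1 : 2*(A:ℤ)*((y:ℤ)^(k+1) - (x:ℤ)^(k+1)) ≤ 2*(A:ℤ)*(((k:ℤ)+1) * (y:ℤ)^k * ((y:ℤ) - (x:ℤ))) :=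
      mul_le_mul_of_nonneg_left hE hA0
    have h2 : 2*(A:ℤ)*(((k:ℤ)+1) * (y:ℤ)^k * ((y:ℤ) - (x:ℤ)))
        = (y:ℤ)^k * (2*(A:ℤ)*((k:ℤ)+1)*((y:ℤ)-(x:ℤ))) := by ring
    have h3 : (y:ℤ)^k * (2*(A:ℤ)*((k:ℤ)+1)*((y:ℤ)-(x:ℤ))) ≤ (y:ℤ)^k * (y:ℤ) :=
      mul_le_mul_of_nonneg_left hAnK (le_of_lt hykpos)
    have h4 : (y:ℤ)^k * (y:ℤ) = (y:ℤ)^(k+1) := by ring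
    linarith
  -- identity
  set E := (y:ℤ)^(k+1) - (x:ℤ)^(k+1) with hEdef
  have hid : a * (x:ℤ)^(k+1) + b * (y:ℤ)^(k+1) = (a+b) * (y:ℤ)^(k+1) - a * E := by
    rw [hEdef]; ring
  have habs_a : |a| ≤ (A:ℤ) := by rw [Int.abs_eq_natAbs]; exact_mod_cast haA
  have habs_ab : |a+b| ≤ (A:ℤ) := by rw [Int.abs_eq_natAbs]; exact_mod_cast habA
  have haE : |a * E| ≤ (A:ℤ) * E := by
    rw [abs_mul, abs_of_nonneg hE0]
    exact mul_le_mul_of_nonneg_right habs_a hE0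
  have haEl := (abs_le.mp haE).1
  have haEu := (abs_le.mp haE).2
  have hynpos : (0:ℤ) < (y:ℤ)^(k+1) := pow_pos hypos' (k+1)
  have hzp : (0:ℤ) < (z:ℤ)^(k+1+1) := pow_pos (by exact_mod_cast hzpos) (k+1+1)
  have hA1' : ((1:ℤ)) ≤ (A:ℤ) := by exact_mod_cast hA1
  rcases lt_or_gt_of_ne hab with hneg | hpos
  · exfalso
    have hab1 : a + b ≤ -1 := by omega
    have : (a+b) * (y:ℤ)^(k+1) ≤ (-1) * (y:ℤ)^(k+1) :=
      mul_le_mul_of_nonneg_right hab1 (le_of_lt hynpos)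
    linarith
  · have hab1 : (1:ℤ) ≤ a + b := hpos
    have hl : (y:ℤ)^(k+1) ≤ (a+b) * (y:ℤ)^(k+1) := le_mul_of_one_le_left (le_of_lt hynpos) hab1
    have hu : (a+b) * (y:ℤ)^(k+1) ≤ (A:ℤ) * (y:ℤ)^(k+1) :=
      mul_le_mul_of_nonneg_right (le_trans (le_abs_self _) habs_ab) (le_of_lt hynpos)
    have hAy : (y:ℤ)^(k+1) ≤ (A:ℤ) * (y:ℤ)^(k+1) := le_mul_of_one_le_left (le_of_lt hynpos) hA1'
    constructor
    · linarith
    · linarith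

noncomputable def myH (n : ℕ) (t : ℕ) : ℝ :=
  Real.log (Real.log t) / Real.log (((n:ℝ)+1)/(n:ℝ))

open Classical in
noncomputable def mySigma (n B C : ℕ) (t : ℕ) :
    Fin C ⊕ (ZMod 3 × ZMod (B^2+1) × ZMod 3 × Bool) :=
  if ht : t < C then Sum.inl ⟨t, ht⟩
  else Sum.inr ((Nat.log B t : ZMod 3),
    ((t / B^(Nat.log B t - 1) : ℕ) : ZMod (B^2+1)),
    ((⌊myH n t⌋ : ℤ) : ZMod 3),
    if Int.fract (myH n t) < 1/2 then true else false)

lemma myT_lt (B x : ℕ) (hB2 : 2 ≤ B) (hx : B ≤ x) :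
    x / B^(Nat.log B x - 1) < B^2 := by
  have hl1 : 1 ≤ Nat.log B x := Nat.log_pos (by omega) hx
  have hx1 : x < B^(Nat.log B x + 1) := Nat.lt_pow_succ_log_self (by omega) x
  have hpow : B^(Nat.log B x + 1) = B^2 * B^(Nat.log B x - 1) := by
    rw [← pow_add]; congr 1; omega
  rw [Nat.div_lt_iff_lt_mul (Nat.pow_pos (by omega))]
  omega

set_option maxHeartbeats 2000000 in
theorem axn_byn_eq_z_pow_succ_not_PR (a b : ℤ) (ha : a ≠ 0) (hb : b ≠ 0)
    (n : ℕ) (hn : 1 ≤ n) (hab : a + b ≠ 0)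
    (h1 : (n + 1 : ℤ) * a + b ≠ 0) (h2 : a + (n + 1 : ℤ) * b ≠ 0) :
    ∃ (r : ℕ) (χ : ℕ → Fin r),
      ∀ x y z : ℕ, 0 < x → 0 < y → 0 < z →
        χ x = χ y → χ y = χ z →
          a * (x : ℤ) ^ n + b * (y : ℤ) ^ n = (z : ℤ) ^ (n + 1) →
            x = y ∧ y = z := by
  classical
  set A : ℕ := a.natAbs + b.natAbs with hAdef
  have hA1 : 1 ≤ A := by
    have := Int.natAbs_pos.mpr ha
    omega
  have haA : a.natAbs ≤ A := by omega
  have hbA : b.natAbs ≤ A := by omega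
  have habA : (a+b).natAbs ≤ A := by
    have := Int.natAbs_add_le a b
    omega
  have hbaA : (b+a).natAbs ≤ A := by
    rw [add_comm]; exact habA
  set B : ℕ := 2*A*(n+1) with hBdef
  have hB : 2*A*(n+1) ≤ B := le_refl _
  have hB2 : 2 ≤ B := by nlinarith
  set C : ℕ := (2*A)^20 * (B+1) with hCdef
  have hCB : B + 1 ≤ C := by
    have h20 : 1 ≤ (2*A)^20 := Nat.one_le_pow _ _ (by omega)
    calc B + 1 = 1 * (B+1) := (one_mul _).symm
    _ ≤ (2*A)^20 * (B+1) := Nat.mul_le_mul_right _ h20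
  refine ⟨Fintype.card (Fin C ⊕ (ZMod 3 × ZMod (B^2+1) × ZMod 3 × Bool)),
    (Fintype.equivFin _) ∘ mySigma n B C, ?_⟩
  intro x y z hx hy hz hxy hyz heq
  have sxy : mySigma n B C x = mySigma n B C y := (Fintype.equivFin _).injective hxy
  have syz : mySigma n B C y = mySigma n B C z := (Fintype.equivFin _).injective hyz
  clear hxy hyz
  by_cases hxC : x < C
  · -- small case
    by_cases hyC : y < C
    · by_cases hzC : z < C
      · rw [mySigma, mySigma, dif_pos hxC, dif_pos hyC] at sxy
        rw [mySigma, mySigma, dif_pos hyC, dif_pos hzC] at syz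
        simp only [Sum.inl.injEq, Fin.mk.injEq] at sxy syz
        exact ⟨sxy, syz⟩
      · rw [mySigma, mySigma, dif_pos hyC, dif_neg hzC] at syz
        simp at syz
    · rw [mySigma, mySigma, dif_pos hxC, dif_neg hyC] at sxy
      simp at sxy
  · -- large case
    exfalso
    by_cases hyC : y < C
    · rw [mySigma, mySigma, dif_neg hxC, dif_pos hyC] at sxy
      simp at sxy
    by_cases hzC : z < C
    · rw [mySigma, mySigma, dif_neg hyC, dif_pos hzC] at syz
      simp at syz
    rw [mySigma, mySigma, dif_neg hxC, dif_neg hyC] at sxy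
    rw [mySigma, mySigma, dif_neg hyC, dif_neg hzC] at syz
    simp only [Sum.inr.injEq, Prod.mk.injEq] at sxy syz
    obtain ⟨e1xy, e2xy, e3xy, e4xy⟩ := sxy
    obtain ⟨e1yz, e2yz, e3yz, e4yz⟩ := syz
    push_neg at hxC hyC hzC
    have hBx : B ≤ x := by omega
    have hBy : B ≤ y := by omega
    have hBz : B ≤ z := by omega
    -- component extraction
    have hmodxy : Nat.log B x ≡ Nat.log B y [MOD 3] :=
      (ZMod.natCast_eq_natCast_iff _ _ _).mp e1xy
    have hTeq : x / B^(Nat.log B x - 1) = y / B^(Nat.log B y - 1) := by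
      have hTx := myT_lt B x hB2 hBx
      have hTy := myT_lt B y hB2 hBy
      have := congrArg ZMod.val e2xy
      rwa [ZMod.val_cast_of_lt (by omega), ZMod.val_cast_of_lt (by omega)] at this
    -- floor/bucket equalities as functions ℕ → ...
    have hfl : ∀ u v : ℕ, ((⌊myH n u⌋ : ℤ) : ZMod 3) = ((⌊myH n v⌋ : ℤ) : ZMod 3) →
        (3:ℤ) ∣ ⌊myH n v⌋ - ⌊myH n u⌋ := by
      intro u v h
      have h' := Int.ModEq.dvd ((ZMod.intCast_eq_intCast_iff _ _ _).mp h)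
      exact_mod_cast h'
    have hbk : ∀ u v : ℕ,
        ((if Int.fract (myH n u) < 1/2 then true else false) =
          (if Int.fract (myH n v) < 1/2 then true else false)) →
        ((Int.fract (myH n u) < 1/2) ↔ (Int.fract (myH n v) < 1/2)) := by
      intro u v h
      by_cases hu : Int.fract (myH n u) < 1/2 <;> by_cases hv : Int.fract (myH n v) < 1/2
      · exact iff_of_true hu hv
      · rw [if_pos hu, if_neg hv] at h; exact absurd h (by simp)
      · rw [if_neg hu, if_pos hv] at h; exact absurd h (by simp)
      · exact iff_of_false hu hv
    -- get the w bounds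
    have hzpos : 0 < z := hz
    have key : ∃ w : ℕ, (w = x ∨ w = y) ∧
        ((w:ℤ))^n ≤ 2 * (z:ℤ)^(n+1) ∧ (z:ℤ)^(n+1) ≤ 2*(A:ℤ)*(w:ℤ)^n := by
      rcases Nat.lt_trichotomy (Nat.log B x) (Nat.log B y) with hlt | heqlog | hgt
      · have hdvd3 : 3 ∣ Nat.log B y - Nat.log B x :=
          (Nat.modEq_iff_dvd' (le_of_lt hlt)).mp hmodxy
        have hfar : Nat.log B x + 3 ≤ Nat.log B y := by omega
        have heq' : b * (y:ℤ)^n + a * (x:ℤ)^n = (z:ℤ)^(n+1) := by linarith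
        exact ⟨y, Or.inr rfl,
          myFar b a n hn A B hA1 hbA haA hB hB2 hb y x z hzpos hBy hBx hfar heq'⟩
      · rcases le_total x y with hxy' | hyx'
        · exact ⟨y, Or.inr rfl,
            myNear a b n hn A B hA1 haA habA hB hB2 hab x y z hzpos hBx hBy hxy' heqlog hTeq heq⟩
        · have heq' : b * (y:ℤ)^n + a * (x:ℤ)^n = (z:ℤ)^(n+1) := by linarith
          have hba : b + a ≠ 0 := by rw [add_comm]; exact hab
          exact ⟨x, Or.inl rfl,
            myNear b a n hn A B hA1 hbA hbaA hB hB2 hba y x z hzpos hBy hBx hyx' heqlog.symm hTeq.symm heq'⟩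
      · have hdvd3 : 3 ∣ Nat.log B x - Nat.log B y :=
          (Nat.modEq_iff_dvd' (le_of_lt hgt)).mp hmodxy.symm
        have hfar : Nat.log B y + 3 ≤ Nat.log B x := by omega
        exact ⟨x, Or.inl rfl,
          myFar a b n hn A B hA1 haA hbA hB hB2 ha x y z hzpos hBx hBy hfar heq⟩
    obtain ⟨w, hwxy, hw1, hw2⟩ := key
    have hCw : C ≤ w := by rcases hwxy with rfl | rfl <;> omega
    -- real analysis
    set L : ℝ := Real.log (2*(A:ℝ)) with hLdef
    have hA1R : (1:ℝ) ≤ (A:ℝ) := by exact_mod_cast hA1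
    have hL : Real.log 2 ≤ L := Real.log_le_log (by norm_num) (by linarith)
    have hL0 : 0 < L := Real.log_pos (by linarith)
    have hwpos : 0 < w := by omega
    have hWR : (1:ℝ) ≤ (w:ℝ) := by exact_mod_cast hwpos
    have hZR : (1:ℝ) ≤ (z:ℝ) := by exact_mod_cast hz
    have hCR : ((2*(A:ℝ)))^20 ≤ (w:ℝ) := by
      have h1 : (2*A)^20 ≤ C := by
        calc (2*A)^20 = (2*A)^20 * 1 := (mul_one _).symm
        _ ≤ (2*A)^20 * (B+1) := Nat.mul_le_mul_left _ (by omega)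
      have h2 : (2*A)^20 ≤ w := le_trans h1 hCw
      have h3 : (((2*A)^20 : ℕ):ℝ) ≤ (w:ℝ) := by exact_mod_cast h2
      calc ((2*(A:ℝ)))^20 = (((2*A)^20 : ℕ):ℝ) := by push_cast; ring
      _ ≤ (w:ℝ) := h3
    have hW : 20 * L ≤ Real.log (w:ℝ) := by
      calc 20 * L = Real.log ((2*(A:ℝ))^20) := by
            rw [Real.log_pow]; push_cast; ring
      _ ≤ Real.log (w:ℝ) := Real.log_le_log (by positivity) hCR
    have hwnR : ((w:ℝ))^n ≤ 2 * ((z:ℝ))^(n+1) := by exact_mod_cast hw1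
    have hznR : ((z:ℝ))^(n+1) ≤ 2*(A:ℝ)*((w:ℝ))^n := by exact_mod_cast hw2
    have hc1 : (n:ℝ) * Real.log (w:ℝ) ≤ Real.log 2 + ((n:ℝ)+1) * Real.log (z:ℝ) := by
      have h1 : Real.log (((w:ℝ))^n) ≤ Real.log (2 * ((z:ℝ))^(n+1)) :=
        Real.log_le_log (by positivity) hwnR
      rw [Real.log_pow, Real.log_mul (by norm_num) (by positivity), Real.log_pow] at h1
      push_cast at h1 ⊢
      linarith
    have hc2 : ((n:ℝ)+1) * Real.log (z:ℝ) ≤ L + (n:ℝ) * Real.log (w:ℝ) := by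
      have h1 : Real.log (((z:ℝ))^(n+1)) ≤ Real.log (2*(A:ℝ)*((w:ℝ))^n) :=
        Real.log_le_log (by positivity) hznR
      rw [Real.log_pow, Real.log_mul (by positivity) (by positivity), Real.log_pow] at h1
      push_cast at h1 ⊢
      linarith
    have hgap := myHgap n hn L (w:ℝ) (z:ℝ) hL hL0 hW hc1 hc2
    have hd : |myH n z - myH n w + 1| ≤ 1/5 := by
      have : myH n z - myH n w
          = (Real.log (Real.log (z:ℝ)) - Real.log (Real.log (w:ℝ))) / Real.log (((n:ℝ)+1)/(n:ℝ)) := by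
        rw [myH, myH, div_sub_div_same]
      rw [this]
      exact hgap
    -- floor/bucket for (w, z)
    have hflwz : (3:ℤ) ∣ ⌊myH n z⌋ - ⌊myH n w⌋ := by
      rcases hwxy with rfl | rfl
      · exact hfl _ _ (e3xy.trans e3yz)
      · exact hfl _ _ e3yz
    have hbkwz : (Int.fract (myH n w) < 1/2) ↔ (Int.fract (myH n z) < 1/2) := by
      rcases hwxy with rfl | rfl
      · exact hbk _ _ (e4xy.trans e4yz)
      · exact hbk _ _ e4yz
    exact myBucket_contra (myH n w) (myH n z) hflwz hbkwz hd
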